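/- arXiv:2407.08654 — 3 statements merged into one kernel-verified Lean document; each statement's English description precedes it below -/
import Mathlib

section
/- Let $1 = t_0 < t_1 < \cdots < t_K$ be integers, and for each round $s$ let $|\mathcal{S}_s| = K + 1 - j$ when $s \in [t_{j-1}, t_j)$. Define $H_i = (t_i-1)/\left(\sum_{j=1}^i \frac{t_j - t_{j-1}}{K+1-j}\right)$ and $\Delta_i = \sqrt{H_i/(t_i-1)}$. Then for any interval $[s_1, s_2] \subseteq [1, t_{i+1}-1]$: $\sum_{s=s_1}^{s_2} \frac{\Delta_{i+1}}{|\mathcal{S}_s|} \leq \sqrt{\sum_{s=s_1}^{s_2} \frac{1}{|\mathcal{S}_s|}}$. -/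
open Finset

/-- The harmonic-mean quantity `H i = (t i - 1) / (∑ j ∈ [1,i], (t j - t (j-1)) / (K+1-j))`. -/
noncomputable def Hmean (K : ℕ) (t : ℕ → ℕ) (i : ℕ) : ℝ :=
  ((t i : ℝ) - 1) / (∑ j ∈ Finset.Icc 1 i, ((t j : ℝ) - (t (j - 1) : ℝ)) / ((K : ℝ) + 1 - (j : ℝ)))

/-- With eviction times `1 = t 0 < t 1 < ⋯ < t K`, armset sizes
`|S s| = K + 1 - j` for `s ∈ [t (j-1), t j)`, and gap `Δ (i+1) = √(H (i+1) / (t (i+1) - 1))`,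
an arm with gap `Δ (i+1)` accrues no significant armset-normalized regret on any interval
`[s1, s2] ⊆ [1, t (i+1) - 1]`. -/
theorem stmt9 (K : ℕ) (hK : 2 ≤ K) (t : ℕ → ℕ) (ht0 : t 0 = 1)
    (hmono : ∀ j < K, t j < t (j + 1))
    (sz : ℕ → ℕ)
    (hsz : ∀ j, 1 ≤ j → j ≤ K → ∀ s, t (j - 1) ≤ s → s < t j → sz s = K + 1 - j)
    (i : ℕ) (hi : i + 1 ≤ K)
    (s1 s2 : ℕ) (hs1 : 1 ≤ s1) (hs12 : s1 ≤ s2) (hs2 : s2 ≤ t (i + 1) - 1) :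
    ∑ s ∈ Finset.Icc s1 s2,
        Real.sqrt (Hmean K t (i + 1) / ((t (i + 1) : ℝ) - 1)) / (sz s : ℝ)
      ≤ Real.sqrt (∑ s ∈ Finset.Icc s1 s2, 1 / (sz s : ℝ)) := by
  -- lower bound on t
  have tlb : ∀ m, m ≤ K → m + 1 ≤ t m := by
    intro m
    induction m with
    | zero => intro _; simp [ht0]
    | succ n ih =>
      intro h
      have h1 : n ≤ K := by omega
      have h2 := hmono n (by omega)
      have h3 := ih h1
      omega
  -- key: the full sum over [1, t m) equals the harmonic denominator
  have key : ∀ m, m ≤ K → ∑ s ∈ Ico 1 (t m), (1 : ℝ) / (sz s : ℝ)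
      = ∑ j ∈ Icc 1 m, ((t j : ℝ) - (t (j - 1) : ℝ)) / ((K : ℝ) + 1 - (j : ℝ)) := by
    intro m
    induction m with
    | zero => intro _; simp [ht0]
    | succ n ih =>
      intro h
      have hn : n ≤ K := by omega
      have hmn : t n < t (n + 1) := hmono n (by omega)
      have h1n : 1 ≤ t n := by have := tlb n hn; omega
      rw [← Finset.sum_Ico_consecutive _ (by omega : 1 ≤ t n) hmn.le, ih hn,
        Finset.sum_Icc_succ_top (by omega : 1 ≤ n + 1)]
      congr 1
      have hc : ∀ s ∈ Ico (t n) (t (n + 1)),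
          (1 : ℝ) / (sz s : ℝ) = 1 / ((K + 1 - (n + 1) : ℕ) : ℝ) := by
        intro s hs
        simp only [mem_Ico] at hs
        rw [hsz (n + 1) (by omega) h s (by simpa using hs.1) hs.2]
      rw [Finset.sum_congr rfl hc, Finset.sum_const, Nat.card_Ico, nsmul_eq_mul]
      have e1 : ((t (n + 1) - t n : ℕ) : ℝ) = (t (n + 1) : ℝ) - (t n : ℝ) := by
        push_cast [Nat.cast_sub hmn.le]; ring
      have e2 : ((K + 1 - (n + 1) : ℕ) : ℝ) = (K : ℝ) + 1 - ((n + 1 : ℕ) : ℝ) := by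
        have : K + 1 - (n + 1) = K - n := by omega
        rw [this, Nat.cast_sub hn]; push_cast; ring
      rw [e1, e2]
      simp only [Nat.add_sub_cancel]
      push_cast [Nat.cast_sub hn]
      ring
  set D : ℝ := ∑ j ∈ Icc 1 (i + 1), ((t j : ℝ) - (t (j - 1) : ℝ)) / ((K : ℝ) + 1 - (j : ℝ))
    with hDdef
  have hDpos : 0 < D := by
    apply Finset.sum_pos
    · intro j hj
      simp only [mem_Icc] at hj
      have hjK : j ≤ K := by omega
      have hmj : t (j - 1) < t j := by
        have := hmono (j - 1) (by omega)
        have : t (j - 1) < t (j - 1 + 1) := this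
        simpa [Nat.sub_add_cancel hj.1] using this
      apply div_pos
      · have : (t (j - 1) : ℝ) < (t j : ℝ) := by exact_mod_cast hmj
        linarith
      · have : (j : ℝ) ≤ (K : ℝ) := by exact_mod_cast hjK
        linarith
    · exact ⟨1, by simp⟩
  have hT2 : 2 ≤ t (i + 1) := by have := tlb (i + 1) hi; omega
  have hT1 : (1 : ℝ) < (t (i + 1) : ℝ) := by exact_mod_cast (by omega : 1 < t (i + 1))
  have hHm : Hmean K t (i + 1) / ((t (i + 1) : ℝ) - 1) = 1 / D := by
    unfold Hmean
    rw [← hDdef, div_right_comm, div_self (by linarith : (t (i + 1) : ℝ) - 1 ≠ 0)]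
  simp_rw [hHm]
  set A : ℝ := ∑ s ∈ Finset.Icc s1 s2, 1 / (sz s : ℝ) with hAdef
  have hA0 : 0 ≤ A := Finset.sum_nonneg fun s _ => by positivity
  have hAD : A ≤ D := by
    rw [hDdef, ← key (i + 1) hi]
    apply Finset.sum_le_sum_of_subset_of_nonneg
    · intro s hs
      simp only [mem_Icc, mem_Ico] at *
      omega
    · intro s _ _; positivity
  have hLHS : ∑ s ∈ Finset.Icc s1 s2, Real.sqrt (1 / D) / (sz s : ℝ)
      = Real.sqrt (1 / D) * A := by
    rw [hAdef, Finset.mul_sum]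
    apply Finset.sum_congr rfl
    intro s _
    rw [mul_one_div]
  rw [hLHS, one_div, Real.sqrt_inv, inv_mul_eq_div,
    div_le_iff₀ (Real.sqrt_pos.mpr hDpos)]
  calc A = Real.sqrt A * Real.sqrt A := (Real.mul_self_sqrt hA0).symm
    _ ≤ Real.sqrt A * Real.sqrt D :=
        mul_le_mul_of_nonneg_left (Real.sqrt_le_sqrt hAD) (Real.sqrt_nonneg _)
end

section
/- Let $X$ and $Z$ be independent standard normal random variables, and let $a \geq 0$, $b \in \mathbb{R}$. Then $\mathbb{P}(Z \geq |aX + b|) \leq \mathbb{P}(Z \geq |aX|)$. -/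
open ProbabilityTheory MeasureTheory Real Set

namespace Stmt12Aux

noncomputable def g : ℝ → ℝ := gaussianPDFReal 0 1

lemma g_even (x : ℝ) : g (-x) = g x := by
  simp [g, gaussianPDFReal, neg_sq]

lemma g_cont : Continuous g := by
  rw [g, gaussianPDFReal_def]
  fun_prop

lemma g_ii (f : ℝ → ℝ) (hf : Continuous f) (u v : ℝ) :
    IntervalIntegrable (fun x => g (f x)) volume u v :=
  (g_cont.comp hf).intervalIntegrable u v

lemma g_ii' (u v : ℝ) : IntervalIntegrable g volume u v :=
  g_cont.intervalIntegrable u v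

lemma g_anti {x y : ℝ} (h : |x| ≤ |y|) : g y ≤ g x := by
  have hxy : x ^ 2 ≤ y ^ 2 := by
    rw [← sq_abs x, ← sq_abs y]
    exact pow_le_pow_left₀ (abs_nonneg x) h 2
  simp only [g, gaussianPDFReal, NNReal.coe_one, mul_one, sub_zero]
  have h2 : (0:ℝ) ≤ (√(2 * π))⁻¹ := by positivity
  apply mul_le_mul_of_nonneg_left _ h2
  exact Real.exp_le_exp.2 (by linarith)

lemma key_nonneg (c r : ℝ) (hc : 0 ≤ c) (hr : 0 ≤ r) :
    ∫ x in (c - r)..(c + r), g x ≤ ∫ x in (-r)..r, g x := by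
  have h1 : ∫ x in (c - r)..(c + r), g x
      = (∫ x in (c - r)..r, g x) + ∫ x in r..(c + r), g x :=
    (intervalIntegral.integral_add_adjacent_intervals (g_ii' _ _) (g_ii' _ _)).symm
  have h2 : ∫ x in (-r)..r, g x
      = (∫ x in (-r)..(c - r), g x) + ∫ x in (c - r)..r, g x :=
    (intervalIntegral.integral_add_adjacent_intervals (g_ii' _ _) (g_ii' _ _)).symm
  rw [h1, h2]
  have e1 : (∫ x in (r - c)..r, g x) = ∫ x in (-r)..(c - r), g x := by
    have h := intervalIntegral.integral_comp_neg (a := r - c) (b := r) g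
    simp only [g_even] at h
    rw [h]
    congr 1
    ring
  have e2 : (∫ x in r..(c + r), g x) = ∫ x in (r - c)..r, g (2*r - x) := by
    rw [intervalIntegral.integral_comp_sub_left g (2*r)]
    congr 1 <;> ring
  have mono : (∫ x in (r - c)..r, g (2*r - x)) ≤ ∫ x in (r - c)..r, g x := by
    apply intervalIntegral.integral_mono_on (by linarith)
      (g_ii (fun x => 2*r - x) (by fun_prop) _ _) (g_ii' _ _)
    intro x hx
    apply g_anti
    have hx1 : r - c ≤ x := hx.1
    have hx2 : x ≤ r := hx.2
    have h2r : 0 ≤ 2*r - x := by linarith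
    calc |x| ≤ 2*r - x := abs_le.2 ⟨by linarith, by linarith⟩
      _ = |2*r - x| := (abs_of_nonneg h2r).symm
  linarith [e2 ▸ (e1 ▸ mono)]

lemma key (c r : ℝ) (hr : 0 ≤ r) :
    ∫ x in (c - r)..(c + r), g x ≤ ∫ x in (-r)..r, g x := by
  rcases le_or_gt 0 c with hc | hc
  · exact key_nonneg c r hc hr
  · have h := key_nonneg (-c) r (by linarith) hr
    have e : (∫ x in (c - r)..(c + r), g x) = ∫ x in (-c - r)..(-c + r), g x := by
      have h2 := intervalIntegral.integral_comp_neg (a := c - r) (b := c + r) g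
      simp only [g_even] at h2
      rw [h2]
      congr 1 <;> ring
    rw [e]
    exact h

lemma section_le (a b z : ℝ) (ha : 0 ≤ a) :
    gaussianReal 0 1 {x | |a * x + b| ≤ z} ≤ gaussianReal 0 1 {x | |a * x| ≤ z} := by
  rcases lt_or_ge z 0 with hz | hz
  · have hempty : {x : ℝ | |a * x + b| ≤ z} = ∅ := by
      ext x
      simp only [mem_setOf_eq, mem_empty_iff_false, iff_false, not_le]
      exact hz.trans_le (abs_nonneg _)
    simp [hempty]
  rcases eq_or_lt_of_le ha with rfl | ha'
  · apply measure_mono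
    intro x hx
    simp only [mem_setOf_eq, zero_mul, abs_zero]
    exact hz
  · have hset1 : {x : ℝ | |a * x + b| ≤ z} = Icc ((-z - b)/a) ((z - b)/a) := by
      ext x
      simp only [mem_setOf_eq, mem_Icc, abs_le]
      constructor
      · rintro ⟨h1, h2⟩
        constructor
        · rw [div_le_iff₀ ha']; linarith
        · rw [le_div_iff₀ ha']; linarith
      · rintro ⟨h1, h2⟩
        rw [div_le_iff₀ ha'] at h1
        rw [le_div_iff₀ ha'] at h2
        constructor <;> linarith
    have hset2 : {x : ℝ | |a * x| ≤ z} = Icc ((-z)/a) (z/a) := by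
      ext x
      simp only [mem_setOf_eq, mem_Icc, abs_le]
      constructor
      · rintro ⟨h1, h2⟩
        constructor
        · rw [div_le_iff₀ ha']; linarith
        · rw [le_div_iff₀ ha']; linarith
      · rintro ⟨h1, h2⟩
        rw [div_le_iff₀ ha'] at h1
        rw [le_div_iff₀ ha'] at h2
        constructor <;> linarith
    rw [hset1, hset2, gaussianReal_apply_eq_integral 0 one_ne_zero,
      gaussianReal_apply_eq_integral 0 one_ne_zero]
    apply ENNReal.ofReal_le_ofReal
    have hle1 : (-z - b)/a ≤ (z - b)/a := by
      apply div_le_div_of_nonneg_right _ ha'.le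
      · linarith
    have hle2 : (-z)/a ≤ z/a := by
      apply div_le_div_of_nonneg_right _ ha'.le
      · linarith
    rw [integral_Icc_eq_integral_Ioc, integral_Icc_eq_integral_Ioc,
      ← intervalIntegral.integral_of_le hle1, ← intervalIntegral.integral_of_le hle2]
    have hc : (-z - b)/a = (-b/a) - z/a := by ring
    have hd : (z - b)/a = (-b/a) + z/a := by ring
    have hneg : (-z)/a = -(z/a) := by ring
    rw [hc, hd, hneg]
    exact key (-b/a) (z/a) (div_nonneg hz ha'.le)

end Stmt12Aux

/-- For independent standard normals `X, Z` and `a ≥ 0`, `b ∈ ℝ`: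
`P(Z ≥ |a X + b|) ≤ P(Z ≥ |a X|)` (wedge-shifting argument). -/
theorem stmt12 (a b : ℝ) (ha : 0 ≤ a) :
    ((gaussianReal 0 1).prod (gaussianReal 0 1)) {p : ℝ × ℝ | |a * p.1 + b| ≤ p.2}
      ≤ ((gaussianReal 0 1).prod (gaussianReal 0 1)) {p : ℝ × ℝ | |a * p.1| ≤ p.2} := by
  have hm1 : MeasurableSet {p : ℝ × ℝ | |a * p.1 + b| ≤ p.2} := by
    apply measurableSet_le <;> fun_prop
  have hm2 : MeasurableSet {p : ℝ × ℝ | |a * p.1| ≤ p.2} := by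
    apply measurableSet_le <;> fun_prop
  rw [Measure.prod_apply_symm hm1, Measure.prod_apply_symm hm2]
  apply lintegral_mono
  intro z
  exact Stmt12Aux.section_le a b z ha
end

section
/- Let $K \geq 2$ and consider nonnegative gap sequences $\{\delta_t(a)\}_{t \in [T], a \in [K]}$ that are piecewise constant over stationary phases $P_1, \ldots, P_L$ partitioning $[T]$, with value $\delta_\ell(a)$ on phase $P_\ell$. Let $0 = \tau_0 < \tau_1 < \cdots$ be significant-shift times such that for each significant phase $[\tau_i, \tau_{i+1})$ and each arm $a$ there is a time $t_i^a \in [\tau_i, \tau_{i+1}]$ such that for every stationary phase $\ell$ intersecting $[\tau_i, t_i^a]$ with intersection length $d_\ell$: $d_\ell \cdot \delta_\ell(a) \leq \sqrt{K d_\ell}$ whenever $\delta_\ell(a) > 0$ (no significant regret before $t_i^a$), and each stationary phase intersects at most two significant phases. Then $\sum_{i} \sum_{a \in [K]} \frac{1}{K}\sum_{t=\tau_i}^{t_i^a} \delta_t(a) \leq \frac{2}{K} \sum_{\ell=1}^L \sum_{a : \delta_\ell(a) > 0} \frac{K}{\delta_\ell(a)}$, i.e. the proposed instance-dependent regret rate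 is bounded by $O\left(\sum_{\ell=1}^L \sum_{a: \delta_\ell(a)>0} \frac{1}{\delta_\ell(a)}\right)$. -/
open Finset

lemma emonoAux (e : ℕ → ℕ) (L : ℕ) (h : ∀ ℓ < L, e ℓ < e (ℓ + 1)) :
    ∀ n ≤ L, ∀ m ≤ n, e m ≤ e n := by
  intro n
  induction n with
  | zero => intro _ m hm; interval_cases m; exact le_refl _
  | succ n ih =>
    intro hn m hm
    rcases Nat.lt_succ_iff_lt_or_eq.mp (Nat.lt_succ_of_le hm) with h' | h'
    · exact le_trans (ih (by omega) m (by omega)) (le_of_lt (h n (by omega)))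
    · exact le_of_eq (by rw [h'])

lemma coverAux (e : ℕ → ℕ) (he0 : e 0 = 0) :
    ∀ L, (∀ ℓ < L, e ℓ < e (ℓ + 1)) → ∀ t, t < e L →
      ∃ ℓ, 1 ≤ ℓ ∧ ℓ ≤ L ∧ e (ℓ - 1) ≤ t ∧ t < e ℓ := by
  intro L
  induction L with
  | zero => intro _ t ht; rw [he0] at ht; omega
  | succ L ih =>
    intro h t ht
    by_cases hc : t < e L
    · obtain ⟨ℓ, h1, h2, h3, h4⟩ := ih (fun ℓ hℓ => h ℓ (by omega)) t hc
      exact ⟨ℓ, h1, by omega, h3, h4⟩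
    · exact ⟨L + 1, by omega, le_refl _, by simpa using Nat.le_of_not_lt hc, ht⟩

/-- In a piecewise-stationary environment with stationary phases
`[e (ℓ-1), e ℓ)` on which arm `a` has constant gap `g ℓ a ≥ 0`, and significant phases
`[τ i, τ (i+1))` with per-arm times `t_i^a = tend i a ∈ [τ i, τ (i+1)]` such that no arm has
significant regret before `tend i a` (each stationary-phase intersection `d` satisfies
`d * g ℓ a ≤ √(K d)` when `g ℓ a > 0`), and each stationary phase intersects at most two
significant phases, the refined instance-dependent regret rate is bounded by the
gap-dependent rate:
`∑ i ∑ a (1/K) ∑_{t=τ i}^{tend i a} δ t a ≤ (2/K) ∑ ℓ ∑_{a : g ℓ a > 0} K / g ℓ a`. -/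
theorem stmt15 (K L nsig : ℕ) (hK : 2 ≤ K) (hL : 1 ≤ L)
    (e : ℕ → ℕ) (he0 : e 0 = 0) (hemono : ∀ ℓ < L, e ℓ < e (ℓ + 1))
    (g : ℕ → Fin K → ℝ) (hg : ∀ ℓ a, 0 ≤ g ℓ a)
    (δ : ℕ → Fin K → ℝ)
    (hpc : ∀ ℓ ∈ Finset.Icc 1 L, ∀ t ∈ Finset.Ico (e (ℓ - 1)) (e ℓ), ∀ a, δ t a = g ℓ a)
    (τ : ℕ → ℕ) (hτmono : ∀ i < nsig, τ i < τ (i + 1))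
    (tend : ℕ → Fin K → ℕ)
    (htend : ∀ i < nsig, ∀ a, τ i ≤ tend i a ∧ tend i a ≤ τ (i + 1) ∧ tend i a < e L)
    (hmain : ∀ i < nsig, ∀ a, ∀ ℓ ∈ Finset.Icc 1 L, 0 < g ℓ a →
      (((Finset.Ico (e (ℓ - 1)) (e ℓ)) ∩ (Finset.Icc (τ i) (tend i a))).card : ℝ) * g ℓ a
        ≤ Real.sqrt ((K : ℝ) *
            (((Finset.Ico (e (ℓ - 1)) (e ℓ)) ∩ (Finset.Icc (τ i) (tend i a))).card : ℝ)))
    (htwo : ∀ ℓ ∈ Finset.Icc 1 L,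
      ((Finset.range nsig).filter
        (fun i => ((Finset.Ico (e (ℓ - 1)) (e ℓ)) ∩ (Finset.Icc (τ i) (τ (i + 1)))).Nonempty)).card
        ≤ 2) :
    ∑ i ∈ Finset.range nsig, ∑ a : Fin K,
        (1 / (K : ℝ)) * ∑ t ∈ Finset.Icc (τ i) (tend i a), δ t a
      ≤ (2 / (K : ℝ)) * ∑ ℓ ∈ Finset.Icc 1 L,
          ∑ a ∈ Finset.univ.filter (fun a => 0 < g ℓ a), (K : ℝ) / g ℓ a := by
  have hK0 : (0:ℝ) < (K:ℝ) := by positivity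
  set D : ℕ → Fin K → ℕ → ℝ := fun i a ℓ =>
    (((Finset.Ico (e (ℓ - 1)) (e ℓ)) ∩ (Finset.Icc (τ i) (tend i a))).card : ℝ) with hD
  -- Step 1: decompose each inner sum
  have step1 : ∀ i ∈ Finset.range nsig, ∀ a : Fin K,
      ∑ t ∈ Finset.Icc (τ i) (tend i a), δ t a
        = ∑ ℓ ∈ Finset.Icc 1 L, D i a ℓ * g ℓ a := by
    intro i hi a
    have hi' := Finset.mem_range.mp hi
    have hdecomp : Finset.Icc (τ i) (tend i a)
        = (Finset.Icc 1 L).biUnion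
            (fun ℓ => Finset.Ico (e (ℓ - 1)) (e ℓ) ∩ Finset.Icc (τ i) (tend i a)) := by
      ext t
      simp only [Finset.mem_biUnion, Finset.mem_inter, Finset.mem_Icc, Finset.mem_Ico]
      constructor
      · intro ht
        have htL : t < e L := lt_of_le_of_lt ht.2 (htend i hi' a).2.2
        obtain ⟨ℓ, h1, h2, h3, h4⟩ := coverAux e he0 L hemono t htL
        exact ⟨ℓ, ⟨h1, h2⟩, ⟨h3, h4⟩, ht⟩
      · rintro ⟨ℓ, _, _, ht⟩; exact ht
    have hdisj : (↑(Finset.Icc 1 L) : Set ℕ).PairwiseDisjoint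
        (fun ℓ => Finset.Ico (e (ℓ - 1)) (e ℓ) ∩ Finset.Icc (τ i) (tend i a)) := by
      intro ℓ1 h1 ℓ2 h2 hne
      simp only [Finset.coe_Icc, Set.mem_Icc] at h1 h2
      refine Finset.disjoint_left.mpr ?_
      intro t ht1 ht2
      simp only [Finset.mem_inter, Finset.mem_Ico] at ht1 ht2
      rcases Nat.lt_or_ge ℓ1 ℓ2 with hlt | hge
      · have : e ℓ1 ≤ e (ℓ2 - 1) := emonoAux e L hemono (ℓ2 - 1) (by omega) ℓ1 (by omega)
        omega
      · have hlt : ℓ2 < ℓ1 := lt_of_le_of_ne hge (fun h => hne h.symm)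
        have : e ℓ2 ≤ e (ℓ1 - 1) := emonoAux e L hemono (ℓ1 - 1) (by omega) ℓ2 (by omega)
        omega
    rw [hdecomp, Finset.sum_biUnion hdisj]
    refine Finset.sum_congr rfl ?_
    intro ℓ hℓ
    have : ∀ t ∈ Finset.Ico (e (ℓ - 1)) (e ℓ) ∩ Finset.Icc (τ i) (tend i a), δ t a = g ℓ a := by
      intro t ht
      exact hpc ℓ hℓ t (Finset.mem_of_mem_inter_left ht) a
    rw [Finset.sum_congr rfl this, Finset.sum_const, nsmul_eq_mul]
  -- Step 2: per (i, ℓ, a) bound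
  have step2 : ∀ i ∈ Finset.range nsig, ∀ ℓ ∈ Finset.Icc 1 L, ∀ a : Fin K, 0 < g ℓ a →
      D i a ℓ * g ℓ a ≤ (K : ℝ) / g ℓ a := by
    intro i hi ℓ hℓ a hga
    have hi' := Finset.mem_range.mp hi
    have hm := hmain i hi' a ℓ hℓ hga
    have hDnn : 0 ≤ D i a ℓ := by positivity
    have hsq : (D i a ℓ * g ℓ a) ^ 2 ≤ (K : ℝ) * D i a ℓ := by
      have h1 : (D i a ℓ * g ℓ a) ^ 2 ≤ Real.sqrt ((K : ℝ) * D i a ℓ) ^ 2 := by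
        apply sq_le_sq' _ hm
        have := Real.sqrt_nonneg ((K : ℝ) * D i a ℓ)
        nlinarith [mul_nonneg hDnn (le_of_lt hga)]
      rwa [Real.sq_sqrt (by positivity)] at h1
    rcases eq_or_lt_of_le hDnn with h0 | h0
    · rw [← h0, zero_mul]; positivity
    · rw [le_div_iff₀ hga]
      nlinarith [mul_pos h0 hga]
  -- Step 3: per (ℓ, a) bound over i
  have step3 : ∀ ℓ ∈ Finset.Icc 1 L, ∀ a : Fin K,
      ∑ i ∈ Finset.range nsig, D i a ℓ * g ℓ a
        ≤ (if 0 < g ℓ a then 2 * ((K : ℝ) / g ℓ a) else 0) := by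
    intro ℓ hℓ a
    by_cases hga : 0 < g ℓ a
    · rw [if_pos hga]
      set F := (Finset.range nsig).filter
        (fun i => ((Finset.Ico (e (ℓ - 1)) (e ℓ)) ∩ (Finset.Icc (τ i) (τ (i + 1)))).Nonempty)
        with hF
      have hsub : F ⊆ Finset.range nsig := Finset.filter_subset _ _
      have hzero : ∀ i ∈ Finset.range nsig, i ∉ F → D i a ℓ * g ℓ a = 0 := by
        intro i hi hiF
        have hi' := Finset.mem_range.mp hi
        rw [hF, Finset.mem_filter] at hiF
        push_neg at hiF
        have hempty := hiF hi
        have hss : (Finset.Ico (e (ℓ - 1)) (e ℓ)) ∩ (Finset.Icc (τ i) (tend i a))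
            ⊆ (Finset.Ico (e (ℓ - 1)) (e ℓ)) ∩ (Finset.Icc (τ i) (τ (i + 1))) := by
          apply Finset.inter_subset_inter_left
          exact Finset.Icc_subset_Icc le_rfl (htend i hi' a).2.1
        have : (Finset.Ico (e (ℓ - 1)) (e ℓ)) ∩ (Finset.Icc (τ i) (tend i a)) = ∅ := by
          rw [← Finset.subset_empty]; rw [← hempty]; exact hss
        simp [hD, this]
      rw [← Finset.sum_subset hsub hzero]
      calc ∑ i ∈ F, D i a ℓ * g ℓ a ≤ ∑ i ∈ F, (K : ℝ) / g ℓ a := by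
            apply Finset.sum_le_sum
            intro i hi
            exact step2 i (hsub hi) ℓ hℓ a hga
        _ = (F.card : ℝ) * ((K : ℝ) / g ℓ a) := by rw [Finset.sum_const, nsmul_eq_mul]
        _ ≤ 2 * ((K : ℝ) / g ℓ a) := by
            apply mul_le_mul_of_nonneg_right _ (by positivity)
            exact_mod_cast htwo ℓ hℓ
    · rw [if_neg hga]
      have hga0 : g ℓ a = 0 := le_antisymm (not_lt.mp hga) (hg ℓ a)
      apply le_of_eq
      apply Finset.sum_eq_zero
      intro i _
      rw [hga0, mul_zero]
  -- Assemble
  calc ∑ i ∈ Finset.range nsig, ∑ a : Fin K,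
        (1 / (K : ℝ)) * ∑ t ∈ Finset.Icc (τ i) (tend i a), δ t a
      = (1 / (K : ℝ)) * ∑ ℓ ∈ Finset.Icc 1 L, ∑ a : Fin K,
          ∑ i ∈ Finset.range nsig, D i a ℓ * g ℓ a := by
        have e1 : ∑ i ∈ Finset.range nsig, ∑ a : Fin K,
            (1 / (K : ℝ)) * ∑ t ∈ Finset.Icc (τ i) (tend i a), δ t a
              = ∑ i ∈ Finset.range nsig, ∑ a : Fin K, ∑ ℓ ∈ Finset.Icc 1 L,
                (1 / (K : ℝ)) * (D i a ℓ * g ℓ a) := by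
          refine Finset.sum_congr rfl fun i hi => Finset.sum_congr rfl fun a _ => ?_
          rw [step1 i hi a, Finset.mul_sum]
        rw [e1]
        have e2 : ∑ i ∈ Finset.range nsig, ∑ a : Fin K, ∑ ℓ ∈ Finset.Icc 1 L,
              (1 / (K : ℝ)) * (D i a ℓ * g ℓ a)
            = ∑ ℓ ∈ Finset.Icc 1 L, ∑ a : Fin K, ∑ i ∈ Finset.range nsig,
              (1 / (K : ℝ)) * (D i a ℓ * g ℓ a) := by
          calc ∑ i ∈ Finset.range nsig, ∑ a : Fin K, ∑ ℓ ∈ Finset.Icc 1 L,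
                (1 / (K : ℝ)) * (D i a ℓ * g ℓ a)
              = ∑ i ∈ Finset.range nsig, ∑ ℓ ∈ Finset.Icc 1 L, ∑ a : Fin K,
                (1 / (K : ℝ)) * (D i a ℓ * g ℓ a) :=
                Finset.sum_congr rfl fun i _ => Finset.sum_comm
            _ = ∑ ℓ ∈ Finset.Icc 1 L, ∑ i ∈ Finset.range nsig, ∑ a : Fin K,
                (1 / (K : ℝ)) * (D i a ℓ * g ℓ a) := Finset.sum_comm
            _ = ∑ ℓ ∈ Finset.Icc 1 L, ∑ a : Fin K, ∑ i ∈ Finset.range nsig,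
                (1 / (K : ℝ)) * (D i a ℓ * g ℓ a) :=
                Finset.sum_congr rfl fun ℓ _ => Finset.sum_comm
        rw [e2]
        simp only [← Finset.mul_sum]
    _ ≤ (1 / (K : ℝ)) * ∑ ℓ ∈ Finset.Icc 1 L, ∑ a : Fin K,
          (if 0 < g ℓ a then 2 * ((K : ℝ) / g ℓ a) else 0) := by
        apply mul_le_mul_of_nonneg_left _ (by positivity)
        apply Finset.sum_le_sum
        intro ℓ hℓ
        apply Finset.sum_le_sum
        intro a _
        exact step3 ℓ hℓ a
    _ = (2 / (K : ℝ)) * ∑ ℓ ∈ Finset.Icc 1 L,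
          ∑ a ∈ Finset.univ.filter (fun a => 0 < g ℓ a), (K : ℝ) / g ℓ a := by
        rw [Finset.mul_sum, Finset.mul_sum]
        refine Finset.sum_congr rfl fun ℓ _ => ?_
        rw [← Finset.sum_filter, ← Finset.mul_sum]
        ring
end
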